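/- Decryption correctness of the conjugate-coding schemes: for all bit strings i, j, k of length n, applying H_k Y_j H_k to the standard basis vector e_i gives the basis vector e_{i+j} up to an explicit phase: (H_k * Y_j * H_k) *ᵥ e_i = ((−1)^m · I^{W(j)}) • e_{i+j}, where m is the number of indices l with j l = 1 and i l + k l = 1, and I = Complex.I. -/

import Mathlib

open Matrix Finset

/-- Hamming weight of a bit string. -/
def hammingW {n : ℕ} (ν : Fin n → ZMod 2) : ℕ :=
  (Finset.univ.filter fun l => ν l = 1).card

/-- Tensor product of a family of one-qubit matrices, as a matrix indexed by bit strings. -/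
def tens {n : ℕ} (A : Fin n → Matrix (ZMod 2) (ZMod 2) ℂ) :
    Matrix (Fin n → ZMod 2) (Fin n → ZMod 2) ℂ :=
  Matrix.of fun x y => ∏ l, A l (x l) (y l)

/-- The Hadamard matrix. -/
noncomputable def Hmat : Matrix (ZMod 2) (ZMod 2) ℂ :=
  (1 / Real.sqrt 2 : ℝ) • !![1, 1; 1, -1]

/-- The Hadamard pattern `H_k = ⨂_l H^{k l}`. -/
noncomputable def Hpat {n : ℕ} (k : Fin n → ZMod 2) :
    Matrix (Fin n → ZMod 2) (Fin n → ZMod 2) ℂ :=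
  tens (fun l => Hmat ^ (k l).val)

/-- The Pauli matrix `Y`. -/
def Ymat : Matrix (ZMod 2) (ZMod 2) ℂ :=
  !![0, -Complex.I; Complex.I, 0]

/-- The Pauli pattern `Y_j = ⨂_l Y^{j l}`. -/
def Ypat {n : ℕ} (j : Fin n → ZMod 2) :
    Matrix (Fin n → ZMod 2) (Fin n → ZMod 2) ℂ :=
  tens (fun l => Ymat ^ (j l).val)

lemma sum_zmod2 (f : ZMod 2 → ℂ) : ∑ x, f x = f 0 + f 1 :=
  Fin.sum_univ_two f

lemma half_aux : (1/Real.sqrt 2) * (1/Real.sqrt 2) = 1/2 := by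
  rw [div_mul_div_comm, one_mul, Real.mul_self_sqrt] <;> norm_num

lemma H_sq : Hmat * Hmat = 1 := by
  change ((1 / Real.sqrt 2 : ℝ) • !![(1:ℂ), 1; 1, -1]) * ((1 / Real.sqrt 2 : ℝ) • !![(1:ℂ), 1; 1, -1]) = (1 : Matrix (Fin 2) (Fin 2) ℂ)
  rw [Matrix.smul_mul, Matrix.mul_smul, smul_smul, half_aux]
  ext a b
  fin_cases a <;> fin_cases b <;>
    simp [Matrix.mul_apply, sum_zmod2, Matrix.one_apply, Complex.real_smul] <;> norm_num

lemma HYH : Hmat * Ymat * Hmat = -Ymat := by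
  change ((1 / Real.sqrt 2 : ℝ) • !![(1:ℂ), 1; 1, -1]) * (!![0, -Complex.I; Complex.I, 0] : Matrix (Fin 2) (Fin 2) ℂ) * ((1 / Real.sqrt 2 : ℝ) • !![(1:ℂ), 1; 1, -1]) = -(!![0, -Complex.I; Complex.I, 0] : Matrix (Fin 2) (Fin 2) ℂ)
  rw [Matrix.smul_mul, Matrix.mul_smul, Matrix.smul_mul, smul_smul, half_aux]
  ext a b
  fin_cases a <;> fin_cases b <;>
    simp [Ymat, Matrix.mul_apply, sum_zmod2, Complex.real_smul] <;> norm_num <;> ring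

lemma tens_mul {n : ℕ} (A B : Fin n → Matrix (ZMod 2) (ZMod 2) ℂ) :
    tens A * tens B = tens (fun l => A l * B l) := by
  ext x y
  simp only [tens, Matrix.mul_apply, Matrix.of_apply]
  rw [Finset.prod_univ_sum, Fintype.piFinset_univ]
  exact Finset.sum_congr rfl fun z _ => (Finset.prod_mul_distrib).symm

lemma zmod_cases (b : ZMod 2) : b = 0 ∨ b = 1 :=
  (by decide : ∀ b : ZMod 2, b = 0 ∨ b = 1) b

lemma single_mat (κ jb : ZMod 2) (a b : ZMod 2) :
    (Hmat ^ κ.val * Ymat ^ jb.val * Hmat ^ κ.val) a b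
      = (Complex.I ^ jb.val * (-1 : ℂ) ^ (if jb = 1 ∧ b + κ = 1 then 1 else 0)) *
          (if a = b + jb then 1 else 0) := by
  have e0 : ((0 : ZMod 2)).val = 0 := rfl
  have e1 : ((1 : ZMod 2)).val = 1 := rfl
  rcases zmod_cases κ with hκ | hκ <;> rcases zmod_cases jb with hj | hj <;>
    subst hκ <;> subst hj <;>
    simp only [e0, e1, pow_zero, pow_one, Matrix.one_mul, Matrix.mul_one, mul_one, H_sq, HYH] <;>
    rcases zmod_cases a with ha | ha <;> rcases zmod_cases b with hb | hb <;>
    subst ha <;> subst hb <;>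
    norm_num [show Ymat 0 0 = 0 from rfl, show Ymat 0 1 = -Complex.I from rfl,
      show Ymat 1 0 = Complex.I from rfl, show Ymat 1 1 = 0 from rfl,
      Matrix.one_apply, show (1+1 : ZMod 2) = 0 from rfl,
      show ((0:ZMod 2) = 1) ↔ False from by decide, show ((1:ZMod 2) = 0) ↔ False from by decide,
      show ((0:ZMod 2) = 2) ↔ True from by decide, show ((1:ZMod 2) = 2) ↔ False from by decide,
      show ((2:ZMod 2) = 1) ↔ False from by decide]

lemma val_eq_ite (b : ZMod 2) : b.val = if b = 1 then 1 else 0 := by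
  rcases zmod_cases b with h | h <;> subst h <;> rfl

/-- Decryption correctness: `H_k Y_j H_k e_i` equals `e_{i+j}` up to an explicit phase. -/
theorem decryption_correctness {n : ℕ} (i j k : Fin n → ZMod 2) :
    (Hpat k * Ypat j * Hpat k) *ᵥ (Pi.single i (1 : ℂ))
      = (((-1 : ℂ) ^ (Finset.univ.filter
            (fun l : Fin n => j l = 1 ∧ i l + k l = 1)).card)
          * Complex.I ^ hammingW j) •
          (Pi.single (i + j) (1 : ℂ) : (Fin n → ZMod 2) → ℂ) := by
  have key : Hpat k * Ypat j * Hpat k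
      = tens (fun l => Hmat ^ (k l).val * Ymat ^ (j l).val * Hmat ^ (k l).val) := by
    rw [Hpat, Ypat, tens_mul, tens_mul]
  funext x
  rw [key]
  have hmv : (tens (fun l => Hmat ^ (k l).val * Ymat ^ (j l).val * Hmat ^ (k l).val) *ᵥ
      Pi.single i (1:ℂ)) x
      = ∏ l, (Hmat ^ (k l).val * Ymat ^ (j l).val * Hmat ^ (k l).val) (x l) (i l) := by
    simp [Matrix.mulVec, dotProduct, Pi.single_apply, mul_ite, tens]
  rw [hmv,
    Finset.prod_congr rfl (fun l _ => single_mat (k l) (j l) (x l) (i l)),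
    Finset.prod_mul_distrib, Finset.prod_mul_distrib,
    Finset.prod_pow_eq_pow_sum, Finset.prod_pow_eq_pow_sum, Finset.prod_boole]
  have hsum1 : ∑ l, (j l).val = hammingW j := by
    rw [hammingW, Finset.card_filter]
    exact Finset.sum_congr rfl fun l _ => val_eq_ite (j l)
  have hsum2 : ∑ l, (if j l = 1 ∧ i l + k l = 1 then 1 else 0)
      = (Finset.univ.filter (fun l : Fin n => j l = 1 ∧ i l + k l = 1)).card := by
    rw [Finset.card_filter]
  rw [hsum1, hsum2]
  have hcond : (∀ l ∈ Finset.univ, x l = i l + j l) ↔ x = i + j := by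
    simp [funext_iff]
  simp only [Pi.smul_apply, Pi.single_apply, smul_eq_mul]
  by_cases hx : x = i + j
  · rw [if_pos (hcond.mpr hx), if_pos hx]
    ring
  · rw [if_neg (fun h => hx (hcond.mp h)), if_neg hx]
    ring
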